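/- arXiv:1510.05987 — 2 statements merged into one kernel-verified Lean document; each statement's English description precedes it below -/
import Mathlib

section
/- (Entropy bound) Let χ = (r₁^{a₁},…,r_k^{a_k}) be a character of (ℤ/nℤ)ⁿ where r₁,…,r_k are distinct and a₁+⋯+a_k = n. Then |\widehat{1_S}(χ)| ≤ (multinomial(n; a₁,…,a_k))^{-1/2} · (n!/nⁿ)^{1/2}. -/
open Finset

/-- `e(x) = exp(2πi x/n)` for `x ∈ ZMod n`, realizing the identification of the dual of
`ZMod n` with `(1/n)ℤ/ℤ`. -/
noncomputable def eZ (n : ℕ) (x : ZMod n) : ℂ :=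
  Complex.exp (2 * Real.pi * Complex.I * (x.val : ℂ) / (n : ℂ))

/-- The Fourier coefficient `\widehat{1_S}(r₁,…,r_n)` of the set `S` of injective
`n`-tuples in `(ZMod n)ⁿ`, namely `n^{-n} ∑_{x ∈ S} e(-∑ᵢ rᵢ xᵢ)`. -/
noncomputable def fourierS (n : ℕ) [NeZero n] (r : Fin n → ZMod n) : ℂ :=
  ((n : ℂ) ^ n)⁻¹ *
    ∑ x ∈ Finset.univ.filter (fun x : Fin n → ZMod n => Function.Injective x),
      eZ n (-(∑ i, r i * x i))

noncomputable def psiZ (n : ℕ) [NeZero n] : AddChar (ZMod n) ℂ :=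
  AddChar.zmodChar n (Complex.isPrimitiveRoot_exp n (NeZero.ne n)).pow_eq_one

lemma eZ_eq_psiZ (n : ℕ) [NeZero n] (x : ZMod n) : eZ n x = psiZ n x := by
  rw [psiZ, AddChar.zmodChar_apply, ← Complex.exp_nat_mul, eZ]
  ring_nf

lemma psiZ_prim (n : ℕ) [NeZero n] : (psiZ n).IsPrimitive :=
  AddChar.zmodChar_primitive_of_primitive_root n (Complex.isPrimitiveRoot_exp n (NeZero.ne n))

lemma sum_eZ (n : ℕ) [NeZero n] (c : ZMod n) :
    ∑ t : ZMod n, eZ n (t * c) = if c = 0 then (n : ℂ) else 0 := by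
  classical
  simp only [eZ_eq_psiZ]
  have h : ∀ t : ZMod n, psiZ n (t * c) = (AddChar.mulShift (psiZ n) c) t := by
    intro t; rw [AddChar.mulShift_apply, mul_comm]
  simp only [h]
  rw [AddChar.sum_eq_ite]
  by_cases hc : c = 0
  · rw [if_pos hc, if_pos, ZMod.card]
    rw [hc, AddChar.mulShift_zero]; rfl
  · rw [if_neg hc, if_neg]
    exact fun h0 => psiZ_prim n hc h0

lemma conj_eZ (n : ℕ) [NeZero n] (x : ZMod n) :
    (starRingEnd ℂ) (eZ n x) = eZ n (-x) := by
  rw [eZ_eq_psiZ, eZ_eq_psiZ, AddChar.map_neg_eq_inv, ← eZ_eq_psiZ]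
  unfold eZ
  rw [← Complex.exp_conj, ← Complex.exp_neg]
  congr 1
  simp only [map_div₀, map_mul, Complex.conj_I, Complex.conj_ofNat, map_natCast,
    Complex.conj_ofReal]
  ring

lemma eZ_sum {n : ℕ} [NeZero n] {m : ℕ} (f : Fin m → ZMod n) :
    eZ n (∑ i, f i) = ∏ i, eZ n (f i) := by
  simp only [eZ_eq_psiZ]
  induction (univ : Finset (Fin m)) using Finset.cons_induction with
  | empty => simp [AddChar.map_zero_eq_one]
  | cons i s hi ih => rw [Finset.sum_cons, Finset.prod_cons, AddChar.map_add_eq_mul, ih]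

lemma eZ_add {n : ℕ} [NeZero n] (u v : ZMod n) : eZ n (u + v) = eZ n u * eZ n v := by
  simp only [eZ_eq_psiZ]; exact AddChar.map_add_eq_mul _ _ _


lemma sum_prod_swap (n : ℕ) [NeZero n] (f : Fin n → ZMod n → ℂ) :
    ∑ r : Fin n → ZMod n, ∏ i, f i (r i) = ∏ i, ∑ t : ZMod n, f i t := by
  classical
  rw [Finset.prod_univ_sum, Fintype.piFinset_univ]

lemma inner_orth (n : ℕ) [NeZero n] (x y : Fin n → ZMod n) :
    ∑ r : Fin n → ZMod n, eZ n (∑ i, r i * (y i - x i))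
      = if y = x then (n:ℂ)^n else 0 := by
  classical
  rw [Finset.sum_congr rfl (fun r _ => eZ_sum (fun i => r i * (y i - x i))),
    sum_prod_swap n (fun i t => eZ n (t * (y i - x i))),
    Finset.prod_congr rfl (fun i _ => sum_eZ n (y i - x i))]
  by_cases h : y = x
  · subst h; simp
  · rw [if_neg h]
    obtain ⟨i, hi⟩ := Function.ne_iff.1 h
    exact Finset.prod_eq_zero (Finset.mem_univ i) (by rw [if_neg (sub_ne_zero.2 hi)])



lemma triple (n : ℕ) [NeZero n] (S : Finset (Fin n → ZMod n)) :
    ∑ r : Fin n → ZMod n, ∑ x ∈ S, ∑ y ∈ S, eZ n (∑ i, r i * (y i - x i))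
      = (S.card : ℂ) * (n:ℂ)^n := by
  classical
  rw [Finset.sum_comm]
  have hx : ∀ x ∈ S, (∑ r : Fin n → ZMod n, ∑ y ∈ S, eZ n (∑ i, r i * (y i - x i)))
      = (n:ℂ)^n := by
    intro x hx
    rw [Finset.sum_comm]
    rw [Finset.sum_congr rfl (fun y _ => inner_orth n x y)]
    rw [Finset.sum_ite_eq' S x (fun _ => (n:ℂ)^n), if_pos hx]
  rw [Finset.sum_congr rfl hx, Finset.sum_const, nsmul_eq_mul]

noncomputable def fourierG (n : ℕ) [NeZero n] (S : Finset (Fin n → ZMod n))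
    (r : Fin n → ZMod n) : ℂ :=
  ((n : ℂ) ^ n)⁻¹ * ∑ x ∈ S, eZ n (-(∑ i, r i * x i))

lemma parseval_gen (n : ℕ) [NeZero n] (S : Finset (Fin n → ZMod n)) :
    ∑ r : Fin n → ZMod n, ‖fourierG n S r‖^2
      = (S.card : ℝ) / (n : ℝ)^n := by
  classical
  set c : ℂ := ((n : ℂ)^n)⁻¹ with hc
  have hn : (n : ℂ) ≠ 0 := Nat.cast_ne_zero.2 (NeZero.ne n)
  have conj_fourier : ∀ r : Fin n → ZMod n,
      (starRingEnd ℂ) (fourierG n S r) = c * ∑ y ∈ S, eZ n (∑ i, r i * y i) := by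
    intro r
    unfold fourierG
    rw [map_mul, map_inv₀, map_pow, map_natCast, map_sum]
    exact congrArg _ (Finset.sum_congr rfl (fun y _ => by rw [conj_eZ, neg_neg]))
  have term : ∀ r : Fin n → ZMod n,
      fourierG n S r * (starRingEnd ℂ) (fourierG n S r)
        = c^2 * ∑ x ∈ S, ∑ y ∈ S, eZ n (∑ i, r i * (y i - x i)) := by
    intro r
    rw [conj_fourier]
    unfold fourierG
    rw [mul_mul_mul_comm, ← sq, Finset.sum_mul_sum]
    refine congrArg _ (Finset.sum_congr rfl (fun x _ => Finset.sum_congr rfl (fun y _ => ?_)))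
    rw [← eZ_add]
    refine congrArg _ ?_
    simp only [mul_sub, Finset.sum_sub_distrib]
    ring
  have hC : ∑ r : Fin n → ZMod n, fourierG n S r * (starRingEnd ℂ) (fourierG n S r)
      = (S.card : ℂ) / (n : ℂ)^n := by
    rw [Finset.sum_congr rfl (fun r _ => term r), ← Finset.mul_sum, triple n S, hc]
    rw [div_eq_mul_inv, mul_comm ((S.card : ℂ)) _, ← mul_assoc, sq]
    rw [mul_assoc ((((n:ℂ)^n)⁻¹)) _ _, inv_mul_cancel₀ (pow_ne_zero n hn), mul_one]
    exact mul_comm _ _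
  have habs : ∀ r : Fin n → ZMod n, ‖fourierG n S r‖^2
      = (fourierG n S r * (starRingEnd ℂ) (fourierG n S r)).re := by
    intro r
    rw [Complex.mul_conj, Complex.ofReal_re, Complex.sq_norm]
  calc ∑ r : Fin n → ZMod n, ‖fourierG n S r‖^2
      = (∑ r : Fin n → ZMod n, fourierG n S r * (starRingEnd ℂ) (fourierG n S r)).re := by
        rw [Complex.re_sum]
        exact Finset.sum_congr rfl (fun r _ => habs r)
    _ = (S.card : ℝ) / (n : ℝ)^n := by
        rw [hC]
        rw [show ((S.card : ℂ) / (n : ℂ)^n) = (((S.card : ℝ) / (n : ℝ)^n : ℝ) : ℂ)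
          by push_cast; ring]
        exact Complex.ofReal_re _

lemma cardS (n : ℕ) [NeZero n] :
    (Finset.univ.filter (fun x : Fin n → ZMod n => Function.Injective x)).card
      = n.factorial := by
  classical
  rw [← Fintype.card_subtype,
    Fintype.card_congr (Equiv.subtypeInjectiveEquivEmbedding (Fin n) (ZMod n)),
    Fintype.card_embedding_eq, ZMod.card, Fintype.card_fin, Nat.descFactorial_self]

lemma parseval (n : ℕ) [NeZero n] :
    ∑ r : Fin n → ZMod n, ‖fourierS n r‖^2
      = (n.factorial : ℝ) / (n : ℝ)^n := by
  have h := parseval_gen n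
    (Finset.univ.filter (fun x : Fin n → ZMod n => Function.Injective x))
  rw [cardS] at h
  exact h

lemma fourierS_comp_perm (n : ℕ) [NeZero n] (χ : Fin n → ZMod n)
    (σ : Equiv.Perm (Fin n)) : fourierS n (χ ∘ σ) = fourierS n χ := by
  classical
  unfold fourierS
  refine congrArg _ ?_
  refine Finset.sum_nbij' (fun x => x ∘ σ.symm) (fun y => y ∘ σ) ?_ ?_ ?_ ?_ ?_
  · intro x hx
    simp only [Finset.mem_filter, Finset.mem_univ, true_and] at hx ⊢
    exact hx.comp σ.symm.injective
  · intro y hy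
    simp only [Finset.mem_filter, Finset.mem_univ, true_and] at hy ⊢
    exact hy.comp σ.injective
  · intro x _; funext i; simp
  · intro y _; funext i; simp
  · intro x _
    have : ∑ i, (χ ∘ σ) i * x i = ∑ i, χ i * (x ∘ σ.symm) i := by
      have h2 := Equiv.sum_comp σ (fun j => χ j * x (σ.symm j))
      simp only [Equiv.symm_apply_apply] at h2
      simp only [Function.comp_apply]
      simpa using h2
    rw [this]

lemma stab_card_le (n k : ℕ) [NeZero n] (a : Fin k → ℕ) (s : Fin k → ZMod n)
    (χ : Fin n → ZMod n)
    (hcount : ∀ i, (Finset.univ.filter (fun j => χ j = s i)).card = a i)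
    (hcover : ∀ j, ∃ i, χ j = s i) :
    (Finset.univ.filter (fun σ : Equiv.Perm (Fin n) => ∀ j, χ (σ j) = χ j)).card
      ≤ ∏ i, (a i).factorial := by
  classical
  have key : (Finset.univ.filter
        (fun σ : Equiv.Perm (Fin n) => ∀ j, χ (σ j) = χ j)).card
      ≤ (Finset.univ :
          Finset (∀ i : Fin k, ({j : Fin n // χ j = s i} ↪ {j : Fin n // χ j = s i}))).card := by
    refine Finset.card_le_card_of_injOn
      (fun σ => if h : ∀ j, χ (σ j) = χ j then
        (fun i => ⟨fun j => ⟨σ j.1, by rw [h j.1]; exact j.2⟩,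
          fun u v huv => Subtype.ext (σ.injective (congrArg Subtype.val huv))⟩)
        else fun i => Function.Embedding.refl _)
      (fun _ _ => Finset.mem_univ _) ?_
    intro σ hσ τ hτ heq
    simp only [Finset.mem_coe, Finset.mem_filter, Finset.mem_univ, true_and] at hσ hτ
    simp only [] at heq
    rw [dif_pos hσ, dif_pos hτ] at heq
    refine Equiv.ext fun j => ?_
    obtain ⟨i, hi⟩ := hcover j
    have h1 := congrFun heq i
    have h2 := congrArg (fun e => (e ⟨j, hi⟩ : {j : Fin n // χ j = s i}).1) h1
    exact h2
  refine key.trans (le_of_eq ?_)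
  rw [Finset.card_univ, Fintype.card_pi]
  refine Finset.prod_congr rfl (fun i _ => ?_)
  rw [Fintype.card_embedding_eq, Fintype.card_subtype, hcount i, Nat.descFactorial_self]

/-- Entropy bound: if `χ = (r₁^{a₁},…,r_k^{a_k})` with distinct `rᵢ`, then
`|\widehat{1_S}(χ)| ≤ multinomial(n; a₁,…,a_k)^{-1/2} (n!/nⁿ)^{1/2}`. -/
theorem fourierS_entropy_bound (n k : ℕ) [NeZero n] (a : Fin k → ℕ) (s : Fin k → ZMod n)
    (hs : Function.Injective s) (ha : ∑ i, a i = n) (χ : Fin n → ZMod n)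
    (hcount : ∀ i, (Finset.univ.filter (fun j => χ j = s i)).card = a i)
    (hcover : ∀ j, ∃ i, χ j = s i) :
    ‖fourierS n χ‖ ≤
      ((Nat.multinomial Finset.univ a : ℝ)) ^ (-(1 : ℝ) / 2) *
        ((n.factorial : ℝ) / (n : ℝ) ^ n) ^ ((1 : ℝ) / 2) := by
  classical
  set O : Finset (Fin n → ZMod n) :=
    Finset.image (fun σ : Equiv.Perm (Fin n) => χ ∘ σ) Finset.univ with hO
  have hM : 0 < ∏ i, (a i).factorial := Finset.prod_pos fun i _ => Nat.factorial_pos _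
  have hfact : n.factorial ≤ O.card * ∏ i, (a i).factorial := by
    have h0 : (Finset.univ : Finset (Equiv.Perm (Fin n))).card = n.factorial := by
      rw [Finset.card_univ, Fintype.card_perm, Fintype.card_fin]
    have h1 : (Finset.univ : Finset (Equiv.Perm (Fin n))).card
        = ∑ r ∈ O, (Finset.univ.filter
            (fun σ : Equiv.Perm (Fin n) => χ ∘ σ = r)).card := by
      refine Finset.card_eq_sum_card_fiberwise ?_
      intro σ _; exact Finset.mem_image_of_mem _ (Finset.mem_univ σ)
    have h2 : ∀ r ∈ O, (Finset.univ.filter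
        (fun σ : Equiv.Perm (Fin n) => χ ∘ σ = r)).card ≤ ∏ i, (a i).factorial := by
      intro r hr
      obtain ⟨σ₀, _, hσ₀⟩ := Finset.mem_image.1 hr
      refine le_trans ?_ (stab_card_le n k a s χ hcount hcover)
      refine Finset.card_le_card_of_injOn (fun σ => σ₀.symm.trans σ) ?_ ?_
      · intro σ hσ
        simp only [Finset.mem_coe, Finset.mem_filter, Finset.mem_univ, true_and] at hσ ⊢
        intro j
        have hj : χ (σ (σ₀.symm j)) = r (σ₀.symm j) := congrFun hσ (σ₀.symm j)
        rw [Equiv.trans_apply, hj, ← hσ₀]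
        simp
      · intro σ1 _ σ2 _ h
        refine Equiv.ext fun x => ?_
        have hx := congrFun (congrArg (fun (e : Equiv.Perm (Fin n)) => (e : Fin n → Fin n)) h)
          (σ₀ x)
        simpa using hx
    rw [← h0, h1]
    calc ∑ r ∈ O, (Finset.univ.filter
          (fun σ : Equiv.Perm (Fin n) => χ ∘ σ = r)).card
        ≤ ∑ _r ∈ O, ∏ i, (a i).factorial := Finset.sum_le_sum h2
      _ = O.card * ∏ i, (a i).factorial := by rw [Finset.sum_const, smul_eq_mul]
  have hmul : (∏ i, (a i).factorial) * Nat.multinomial Finset.univ a = n.factorial := by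
    rw [Nat.multinomial_spec, ha]
  have hcard : Nat.multinomial Finset.univ a ≤ O.card := by
    have h3 : (∏ i, (a i).factorial) * Nat.multinomial Finset.univ a
        ≤ (∏ i, (a i).factorial) * O.card := by
      rw [hmul, mul_comm ((∏ i, (a i).factorial)) (#O)]
      exact hfact
    exact Nat.le_of_mul_le_mul_left h3 hM
  set X : ℝ := ‖fourierS n χ‖ with hX
  have hXnn : 0 ≤ X := norm_nonneg _
  have hsumO : ∑ r ∈ O, ‖fourierS n r‖^2 = (O.card : ℝ) * X^2 := by
    have : ∀ r ∈ O, ‖fourierS n r‖^2 = X^2 := by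
      intro r hr
      obtain ⟨σ, _, hσ⟩ := Finset.mem_image.1 hr
      rw [← hσ, fourierS_comp_perm n χ σ]
    rw [Finset.sum_congr rfl this, Finset.sum_const, nsmul_eq_mul]
  have hle : (Nat.multinomial Finset.univ a : ℝ) * X^2
      ≤ (n.factorial : ℝ) / (n : ℝ)^n := by
    calc (Nat.multinomial Finset.univ a : ℝ) * X^2
        ≤ (O.card : ℝ) * X^2 :=
          mul_le_mul_of_nonneg_right (Nat.cast_le.2 hcard) (sq_nonneg X)
      _ = ∑ r ∈ O, ‖fourierS n r‖^2 := hsumO.symm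
      _ ≤ ∑ r : Fin n → ZMod n, ‖fourierS n r‖^2 :=
          Finset.sum_le_sum_of_subset_of_nonneg (Finset.subset_univ O)
            (fun r _ _ => sq_nonneg _)
      _ = (n.factorial : ℝ) / (n : ℝ)^n := parseval n
  set m : ℝ := (Nat.multinomial Finset.univ a : ℝ) with hm'
  set B : ℝ := (n.factorial : ℝ) / (n : ℝ)^n with hB'
  have hm : 0 < m := by
    rw [hm']; exact_mod_cast Nat.multinomial_pos _ _
  have hB : 0 ≤ B := div_nonneg (Nat.cast_nonneg _) (pow_nonneg (Nat.cast_nonneg _) _)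
  have hX2 : X^2 ≤ B / m := by
    rw [le_div_iff₀ hm, mul_comm]
    exact hle
  have hXle : X ≤ Real.sqrt (B / m) := (Real.le_sqrt hXnn (div_nonneg hB hm.le)).2 hX2
  refine hXle.trans (le_of_eq ?_)
  rw [Real.sqrt_eq_rpow, Real.div_rpow hB hm.le, neg_div, Real.rpow_neg hm.le,
    div_eq_mul_inv, mul_comm]
end

section
/- The number Q(m,n) = ∑_{k=0}^m (−1)^{m−k} C(n−k,m−k) n^k/k! is the coefficient of X^m in the power series expansion of f(X) = n^{n+1} e^X / (n+X)^{n−m+1} around X = 0. -/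
open Finset

private lemma pascal_sum (u : ℕ → ℂ) (m : ℕ) :
    ∑ k ∈ Finset.range (m+1), (m.choose k : ℂ) * (u k + u (k+1))
      = ∑ k ∈ Finset.range (m+2), ((m+1).choose k : ℂ) * u k := by
  have h1 : ∑ k ∈ Finset.range (m+2), ((m+1).choose k : ℂ) * u k
      = ∑ k ∈ Finset.range (m+1), ((m+1).choose (k+1) : ℂ) * u (k+1)
        + ((m+1).choose 0 : ℂ) * u 0 :=
    Finset.sum_range_succ' _ _
  have h2 : ∑ k ∈ Finset.range (m+2), (m.choose k : ℂ) * u k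
      = ∑ k ∈ Finset.range (m+1), (m.choose (k+1) : ℂ) * u (k+1)
        + (m.choose 0 : ℂ) * u 0 :=
    Finset.sum_range_succ' _ _
  have h3 : ∑ k ∈ Finset.range (m+2), (m.choose k : ℂ) * u k
      = ∑ k ∈ Finset.range (m+1), (m.choose k : ℂ) * u k := by
    rw [Finset.sum_range_succ, Nat.choose_succ_self, Nat.cast_zero, zero_mul, add_zero]
  simp only [Nat.choose_succ_succ, Nat.cast_add, add_mul, Nat.choose_zero_right, Nat.cast_one]
    at h1 h2 ⊢
  rw [h1, Finset.sum_add_distrib]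
  rw [h3] at h2
  simp only [mul_add]
  rw [Finset.sum_add_distrib, h2]
  ring

private lemma aux_deriv (b c : ℂ) (a : ℤ) (m : ℕ) : ∀ x : ℂ, c + x ≠ 0 →
    iteratedDeriv m (fun X : ℂ => b * Complex.exp X * (c + X) ^ a) x
      = ∑ k ∈ Finset.range (m+1), (m.choose k : ℂ) * (∏ i ∈ Finset.range k, ((a : ℂ) - i)) *
          (b * Complex.exp x * (c + x) ^ (a - (k : ℤ))) := by
  induction m with
  | zero => intro x hx; simp [iteratedDeriv_zero]
  | succ m ih =>
    intro x hx
    rw [iteratedDeriv_succ]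
    have hev : iteratedDeriv m (fun X : ℂ => b * Complex.exp X * (c + X) ^ a)
        =ᶠ[nhds x] fun y => ∑ k ∈ Finset.range (m+1),
          (m.choose k : ℂ) * (∏ i ∈ Finset.range k, ((a : ℂ) - i)) *
            (b * Complex.exp y * (c + y) ^ (a - (k : ℤ))) := by
      have h1 : ∀ᶠ y in nhds x, c + y ≠ 0 :=
        (continuous_const.add continuous_id).continuousAt.eventually_ne hx
      exact h1.mono fun y hy => ih y hy
    rw [hev.deriv_eq]
    have hterm : ∀ k : ℕ, HasDerivAt
        (fun y : ℂ => (m.choose k : ℂ) * (∏ i ∈ Finset.range k, ((a : ℂ) - i)) *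
          (b * Complex.exp y * (c + y) ^ (a - (k : ℤ))))
        ((m.choose k : ℂ) * (∏ i ∈ Finset.range k, ((a : ℂ) - i)) *
          (b * Complex.exp x * (c + x) ^ (a - (k : ℤ))
            + b * Complex.exp x * (((a - (k : ℤ) : ℤ) : ℂ) * (c + x) ^ (a - (k : ℤ) - 1)))) x := by
      intro k
      refine HasDerivAt.const_mul _ ?_
      have h1 : HasDerivAt (fun y : ℂ => b * Complex.exp y) (b * Complex.exp x) x :=
        (Complex.hasDerivAt_exp x).const_mul b
      have h2 : HasDerivAt (fun y : ℂ => (c + y) ^ (a - (k : ℤ)))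
          (((a - (k : ℤ) : ℤ) : ℂ) * (c + x) ^ (a - (k : ℤ) - 1)) x := by
        have hz := hasDerivAt_zpow (a - (k : ℤ)) (c + x) (Or.inl hx)
        have hadd : HasDerivAt (fun y : ℂ => c + y) 1 x := (hasDerivAt_id x).const_add c
        have := hz.comp x hadd
        rw [mul_one] at this
        exact this
      have := h1.mul h2
      exact this
    rw [HasDerivAt.deriv (HasDerivAt.fun_sum (fun k _ => hterm k))]
    have step : ∀ k ∈ Finset.range (m+1),
        (m.choose k : ℂ) * (∏ i ∈ Finset.range k, ((a : ℂ) - i)) *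
          (b * Complex.exp x * (c + x) ^ (a - (k : ℤ))
            + b * Complex.exp x * (((a - (k : ℤ) : ℤ) : ℂ) * (c + x) ^ (a - (k : ℤ) - 1)))
        = (m.choose k : ℂ) *
            ((∏ i ∈ Finset.range k, ((a : ℂ) - i)) * (b * Complex.exp x * (c + x) ^ (a - (k : ℤ)))
            + (∏ i ∈ Finset.range (k+1), ((a : ℂ) - i)) *
                (b * Complex.exp x * (c + x) ^ (a - ((k+1 : ℕ) : ℤ)))) := by
      intro k _
      rw [Finset.prod_range_succ]
      have : (a - ((k+1 : ℕ) : ℤ)) = a - (k : ℤ) - 1 := by push_cast; ring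
      rw [this]
      push_cast
      ring
    rw [Finset.sum_congr rfl step,
      pascal_sum (fun k => (∏ i ∈ Finset.range k, ((a : ℂ) - i)) *
        (b * Complex.exp x * (c + x) ^ (a - (k : ℤ)))) m]
    exact Finset.sum_congr rfl fun k _ => by ring

private lemma asc_prod (N : ℕ) : ∀ j : ℕ,
    ∏ i ∈ Finset.range j, (((-(N : ℤ) : ℤ) : ℂ) - i) = (-1) ^ j * (N.ascFactorial j : ℂ)
  | 0 => by simp
  | j + 1 => by
    rw [Finset.prod_range_succ, asc_prod N j, Nat.ascFactorial_succ]
    push_cast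
    ring

private lemma nat_ident (n m k : ℕ) (hm : m ≤ n) (hk : k ≤ m) :
    Nat.choose (n-k) (m-k) * m.factorial
      = Nat.choose m (m-k) * ((n - m + 1).ascFactorial (m-k)) * k.factorial := by
  set j := m - k with hj
  set s := n - m with hs
  have hnk : n - k = s + j := by omega
  have h1 : (s+1).ascFactorial j * s.factorial = (s+j).factorial := by
    rw [mul_comm]; exact Nat.factorial_mul_ascFactorial s j
  have h2 : Nat.choose (s+j) j * j.factorial * s.factorial = (s+j).factorial := by
    have := Nat.choose_mul_factorial_mul_factorial (Nat.le_add_left j s)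
    simpa [Nat.add_sub_cancel] using this
  have hasc : (s+1).ascFactorial j = Nat.choose (s+j) j * j.factorial :=
    Nat.eq_of_mul_eq_mul_right s.factorial_pos (h1.trans h2.symm)
  have h3 : Nat.choose m j * j.factorial * k.factorial = m.factorial := by
    have := Nat.choose_mul_factorial_mul_factorial (Nat.sub_le m k)
    rwa [← hj, Nat.sub_sub_self hk] at this
  have hN : n - m + 1 = s + 1 := by omega
  rw [hnk, hN, hasc, ← h3]
  ring

/-- `Q(m,n) = ∑_{k≤m} (−1)^{m−k} C(n−k,m−k) n^k/k!` is the `m`-th Taylor coefficient at `0`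
of `f(X) = n^{n+1} e^X / (n+X)^{n−m+1}`. -/
theorem Qmn_eq_taylor_coeff (n m : ℕ) (hn : 0 < n) (hm : m ≤ n) :
    (∑ k ∈ Finset.range (m + 1),
        (-1 : ℂ) ^ (m - k) * (Nat.choose (n - k) (m - k) : ℂ) * (n : ℂ) ^ k / k.factorial) =
      iteratedDeriv m (fun X : ℂ => (n : ℂ) ^ (n + 1) * Complex.exp X / (n + X) ^ (n - m + 1)) 0
        / m.factorial := by
  have hn0 : (n : ℂ) ≠ 0 := Nat.cast_ne_zero.mpr hn.ne'
  set N : ℕ := n - m + 1 with hN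
  set a : ℤ := -(N : ℤ) with ha
  have hfe : (fun X : ℂ => (n : ℂ) ^ (n + 1) * Complex.exp X / (n + X) ^ (n - m + 1))
      = fun X : ℂ => (n : ℂ) ^ (n+1) * Complex.exp X * ((n : ℂ) + X) ^ a := by
    funext X
    rw [div_eq_mul_inv, ha, zpow_neg, zpow_natCast]
  have h0 : (n : ℂ) + 0 ≠ 0 := by simpa using hn0
  rw [hfe, aux_deriv ((n : ℂ) ^ (n+1)) (n : ℂ) a m 0 h0,
    ← Finset.sum_range_reflect (fun k => (m.choose k : ℂ) *
      (∏ i ∈ Finset.range k, ((a : ℂ) - i)) *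
      ((n : ℂ) ^ (n+1) * Complex.exp 0 * ((n : ℂ) + 0) ^ (a - (k : ℤ)))) (m+1),
    Finset.sum_div]
  refine Finset.sum_congr rfl fun k hk => ?_
  rw [Finset.mem_range] at hk
  have hkm : k ≤ m := Nat.lt_succ_iff.mp hk
  have hmk : m + 1 - 1 - k = m - k := by omega
  rw [hmk]
  have hprod : ∏ i ∈ Finset.range (m-k), ((a : ℂ) - i)
      = (-1) ^ (m-k) * (N.ascFactorial (m-k) : ℂ) := by
    rw [ha]; exact_mod_cast asc_prod N (m-k)
  have hbase : (n : ℂ) ^ (n+1) * Complex.exp 0 * ((n : ℂ) + 0) ^ (a - ((m-k : ℕ) : ℤ))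
      = (n : ℂ) ^ k := by
    rw [Complex.exp_zero, mul_one, add_zero, ← zpow_natCast (n : ℂ) (n+1),
      ← zpow_add₀ hn0, ← zpow_natCast (n : ℂ) k]
    congr 1
    have h1 : ((N : ℕ) : ℤ) = (n : ℤ) - m + 1 := by omega
    have h2 : ((m - k : ℕ) : ℤ) = (m : ℤ) - k := by omega
    rw [ha]
    push_cast [h1, h2]
    omega
  rw [hprod, hbase]
  have hfac : (k.factorial : ℂ) ≠ 0 := Nat.cast_ne_zero.mpr k.factorial_ne_zero
  have hfacm : (m.factorial : ℂ) ≠ 0 := Nat.cast_ne_zero.mpr m.factorial_ne_zero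
  have hnat := nat_ident n m k hm hkm
  rw [Nat.choose_symm hkm] at hnat
  have hcast : ((Nat.choose (n-k) (m-k) : ℕ) : ℂ) * m.factorial
      = (Nat.choose m k : ℂ) * (N.ascFactorial (m-k) : ℂ) * k.factorial := by
    exact_mod_cast congrArg (Nat.cast : ℕ → ℂ) hnat
  field_simp
  rw [Nat.choose_symm hkm]
  linear_combination hcast
end
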